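/- For any vector y ∈ ℝ^p and α ∈ (0,2) with β = α/(2−α), the minimum in the variational formula ‖y‖_α = min_{z ∈ ℝ_+^p} (1/2)∑_j y_j²/z_j + (1/2)‖z‖_β is uniquely attained at z_j = |y_j|^{2−α} ‖y‖_α^{α−1} for all j (when y ≠ 0). -/

import Mathlib

open scoped BigOperators ENNReal

open Set Real Finset

variable {p : ℕ}

/-- The ℓ_α quasi-norm of a vector `y ∈ ℝ^p`: `(∑ j |y j|^α)^(1/α)`. -/
noncomputable def lpQuasiNorm {p : ℕ} (α : ℝ) (y : Fin p → ℝ) : ℝ :=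
  (∑ j, |y j| ^ α) ^ (1 / α)



variable {p : ℕ}

lemma sum_abs_rpow_pos {α : ℝ} (hα1 : 0 < α) {y : Fin p → ℝ} (hy : y ≠ 0) :
    0 < ∑ j, |y j| ^ α := by
  obtain ⟨j0, hj0⟩ := Function.ne_iff.mp hy
  exact Finset.sum_pos' (fun j _ => Real.rpow_nonneg (abs_nonneg _) _)
    ⟨j0, Finset.mem_univ _, Real.rpow_pos_of_pos (abs_pos.mpr hj0) _⟩

lemma lpQuasiNorm_pos {α : ℝ} (hα1 : 0 < α) {y : Fin p → ℝ} (hy : y ≠ 0) :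
    0 < lpQuasiNorm α y :=
  Real.rpow_pos_of_pos (sum_abs_rpow_pos hα1 hy) _

lemma lpQuasiNorm_rpow {α : ℝ} (hα1 : 0 < α) {y : Fin p → ℝ} (hy : y ≠ 0) :
    lpQuasiNorm α y ^ α = ∑ j, |y j| ^ α := by
  rw [lpQuasiNorm, ← Real.rpow_mul (sum_abs_rpow_pos hα1 hy).le, one_div,
    inv_mul_cancel₀ (ne_of_gt hα1), Real.rpow_one]


lemma strictConvexOn_rpow_neg {q : ℝ} (hq : q < 0) :
    StrictConvexOn ℝ (Set.Ioi (0:ℝ)) fun x : ℝ => x ^ q := by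
  apply strictConvexOn_of_deriv2_pos (convex_Ioi 0)
  · intro x hx
    exact (Real.continuousAt_rpow_const x q (Or.inl (ne_of_gt hx))).continuousWithinAt
  · intro x hx
    rw [interior_Ioi] at hx
    have hx0 : (0:ℝ) < x := hx
    have h1 : deriv^[2] (fun x : ℝ => x ^ q) x
        = deriv (deriv (fun x : ℝ => x ^ q)) x := by
      simp [Function.iterate_succ, Function.comp]
    rw [h1]
    have heq : deriv (fun x : ℝ => x ^ q) =ᶠ[nhds x] fun y => q * y ^ (q - 1) := by
      filter_upwards [eventually_ne_nhds (ne_of_gt hx0)] with y hy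
      exact Real.deriv_rpow_const y q
    rw [heq.deriv_eq]
    have hd : HasDerivAt (fun y : ℝ => q * y ^ (q-1)) (q * ((q-1) * x ^ (q-1-1))) x :=
      (Real.hasDerivAt_rpow_const (Or.inl (ne_of_gt hx0))).const_mul q
    rw [hd.deriv]
    have ht := Real.rpow_pos_of_pos hx0 (q-1-1)
    have h2 : 0 < q * (q - 1) := mul_pos_of_neg_of_neg hq (by linarith)
    nlinarith

lemma amgm_half {A B N : ℝ} (hA0 : 0 ≤ A) (hB : 0 ≤ B) (hN : 0 < N)
    (h3 : N ^ 2 ≤ A * B) : N ≤ (A + B) / 2 := by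
  nlinarith [sq_nonneg (A - B)]

lemma amgm_eq {A B N : ℝ} (hA0 : 0 ≤ A) (hB : 0 ≤ B) (hN : 0 < N)
    (h3 : N ^ 2 ≤ A * B) (heq : (A + B) / 2 = N) : A = N ∧ B = N := by
  have hABle : A * B ≤ N ^ 2 := by nlinarith [sq_nonneg (A - B)]
  have hsq : (A - B) ^ 2 = 0 := by nlinarith
  have h4 : A - B = 0 := by
    exact pow_eq_zero_iff (n := 2) (by norm_num) |>.mp hsq
  constructor <;> linarith

lemma key_real (α β : ℝ) (hα1 : 0 < α) (hα2 : α < 2) (hβ : β = α / (2 - α))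
    (y : Fin p → ℝ) (hy : y ≠ 0) (z : Fin p → ℝ) (hz : ∀ j, 0 ≤ z j)
    (hzpos : ∀ j, y j ≠ 0 → 0 < z j) :
    lpQuasiNorm α y ≤ ((∑ j, y j ^ 2 / z j) + lpQuasiNorm β z) / 2 ∧
    (((∑ j, y j ^ 2 / z j) + lpQuasiNorm β z) / 2 = lpQuasiNorm α y →
      z = fun j => |y j| ^ (2 - α) * lpQuasiNorm α y ^ (α - 1)) := by
  have h2α : (0:ℝ) < 2 - α := by linarith
  have hβpos : 0 < β := by rw [hβ]; positivity
  have hβne : β ≠ 0 := ne_of_gt hβpos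
  have hβα : (2 - α) * β = α := by rw [hβ]; field_simp
  have hαβ : α / β = 2 - α := by rw [hβ]; field_simp
  set S : Finset (Fin p) := Finset.univ.filter (fun j => y j ≠ 0) with hSdef
  have hmemS : ∀ j, j ∈ S ↔ y j ≠ 0 := by
    intro j; simp [hSdef]
  obtain ⟨j0, hj0'⟩ := Function.ne_iff.mp hy
  have hj0 : y j0 ≠ 0 := hj0'
  have hj0S : j0 ∈ S := (hmemS j0).mpr hj0
  set Sf : ℝ := ∑ j, |y j| ^ α with hSfdef
  have hSf : 0 < Sf := sum_abs_rpow_pos hα1 hy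
  set N : ℝ := lpQuasiNorm α y with hNdef
  have hN : 0 < N := lpQuasiNorm_pos hα1 hy
  have hNα : N ^ α = Sf := lpQuasiNorm_rpow hα1 hy
  have hSsum : ∀ (g : Fin p → ℝ), (∀ j, y j = 0 → g j = 0) → ∑ j ∈ S, g j = ∑ j, g j := by
    intro g hg
    refine Finset.sum_subset (Finset.subset_univ S) (fun j _ hj => ?_)
    exact hg j (by simpa [hmemS] using hj)
  set A : ℝ := ∑ j, y j ^ 2 / z j with hAdef
  have hA0 : 0 ≤ A := Finset.sum_nonneg fun j _ => div_nonneg (sq_nonneg _) (hz j)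
  set BS : ℝ := ∑ j ∈ S, z j ^ β with hBSdef
  set Ball : ℝ := ∑ j, z j ^ β with hBalldef
  have hBSpos : 0 < BS :=
    Finset.sum_pos' (fun j _ => Real.rpow_nonneg (hz j) _)
      ⟨j0, hj0S, Real.rpow_pos_of_pos (hzpos j0 hj0) _⟩
  have hBSle : BS ≤ Ball :=
    Finset.sum_le_sum_of_subset_of_nonneg (Finset.subset_univ S)
      (fun j _ _ => Real.rpow_nonneg (hz j) _)
  have hBallpos : 0 < Ball := lt_of_lt_of_le hBSpos hBSle
  have hBeq : lpQuasiNorm β z = Ball ^ (1/β) := by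
    rw [lpQuasiNorm]; congr 1; exact Finset.sum_congr rfl fun j _ => by
      rw [abs_of_nonneg (hz j)]
  set B : ℝ := Ball ^ (1/β) with hBdef
  have hBpos : 0 < B := Real.rpow_pos_of_pos hBallpos _
  -- Jensen setup
  set f : ℝ → ℝ := fun x => x ^ (-(1/β)) with hfdef
  have hf : StrictConvexOn ℝ (Set.Ioi (0:ℝ)) f :=
    strictConvexOn_rpow_neg (by rw [neg_lt, neg_zero]; positivity)
  set w : Fin p → ℝ := fun j => |y j| ^ α / Sf with hwdef
  set x : Fin p → ℝ := fun j => (z j / |y j| ^ (2 - α)) ^ β with hxdef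
  have hwpos : ∀ j ∈ S, 0 < w j := fun j hj =>
    div_pos (Real.rpow_pos_of_pos (abs_pos.mpr ((hmemS j).mp hj)) _) hSf
  have hw1 : ∑ j ∈ S, w j = 1 := by
    rw [hwdef, ← Finset.sum_div]
    rw [hSsum (fun j => |y j| ^ α) (fun j hj => by
      simp [hj, Real.zero_rpow (ne_of_gt hα1)])]
    exact div_self (ne_of_gt hSf)
  have hxmem : ∀ j ∈ S, x j ∈ Set.Ioi (0:ℝ) := by
    intro j hj
    exact Real.rpow_pos_of_pos (div_pos (hzpos j ((hmemS j).mp hj))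
      (Real.rpow_pos_of_pos (abs_pos.mpr ((hmemS j).mp hj)) _)) _
  have habspow : ∀ j, y j ≠ 0 → (|y j| ^ (2-α)) ^ β = |y j| ^ α := by
    intro j hyj
    rw [← Real.rpow_mul (abs_nonneg _), hβα]
  have hterm_wx : ∀ j ∈ S, w j • x j = z j ^ β / Sf := by
    intro j hj
    have hyj : y j ≠ 0 := (hmemS j).mp hj
    have hyjpos : 0 < |y j| := abs_pos.mpr hyj
    have hyp : (0:ℝ) < |y j| ^ (2-α) := Real.rpow_pos_of_pos hyjpos _
    have hya : (0:ℝ) < |y j| ^ α := Real.rpow_pos_of_pos hyjpos _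
    show |y j| ^ α / Sf * (z j / |y j| ^ (2 - α)) ^ β = z j ^ β / Sf
    rw [Real.div_rpow (hz j) (Real.rpow_nonneg (abs_nonneg _) _), habspow j hyj]
    field_simp
  have hsum_wx : ∑ j ∈ S, w j • x j = BS / Sf := by
    rw [Finset.sum_congr rfl hterm_wx, ← Finset.sum_div]
  have hfval : ∀ j ∈ S, f (x j) = |y j| ^ (2-α) / z j := by
    intro j hj
    have hyj : y j ≠ 0 := (hmemS j).mp hj
    have hb0 : (0:ℝ) ≤ z j / |y j| ^ (2-α) :=
      div_nonneg (hz j) (Real.rpow_nonneg (abs_nonneg _) _)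
    show ((z j / |y j| ^ (2 - α)) ^ β) ^ (-(1/β)) = |y j| ^ (2-α) / z j
    rw [← Real.rpow_mul hb0]
    rw [show β * -(1/β) = -1 by field_simp]
    rw [Real.rpow_neg_one, inv_div]
  have hterm_wfx : ∀ j ∈ S, w j • f (x j) = (y j ^ 2 / z j) / Sf := by
    intro j hj
    have hyj : y j ≠ 0 := (hmemS j).mp hj
    have hyjpos : 0 < |y j| := abs_pos.mpr hyj
    have hzj : 0 < z j := hzpos j hyj
    rw [smul_eq_mul, hfval j hj]
    show |y j| ^ α / Sf * (|y j| ^ (2-α) / z j) = (y j ^ 2 / z j) / Sf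
    have hy2 : |y j| ^ α * |y j| ^ (2-α) = y j ^ 2 := by
      rw [← Real.rpow_add hyjpos]
      rw [show α + (2 - α) = (2:ℝ) by ring]
      rw [show ((2:ℝ) = ((2:ℕ):ℝ)) by norm_num, Real.rpow_natCast, sq_abs]
    field_simp
    rw [← hy2]
  have hsum_wfx : ∑ j ∈ S, w j • f (x j) = A / Sf := by
    rw [Finset.sum_congr rfl hterm_wfx, ← Finset.sum_div, hAdef]
    rw [hSsum (fun j => y j ^ 2 / z j) (fun j hj => by simp [hj])]
  have hJ : f (BS / Sf) ≤ A / Sf := by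
    have := hf.convexOn.map_sum_le (t := S) (w := w) (p := x)
      (fun j hj => (hwpos j hj).le) hw1 hxmem
    rw [hsum_wx, hsum_wfx] at this
    exact this
  have hrpow2 : N ^ (2:ℝ) = N ^ 2 := by
    rw [show ((2:ℝ) = ((2:ℕ):ℝ)) by norm_num, Real.rpow_natCast]
  have hBSb : 0 < BS ^ (1/β) := Real.rpow_pos_of_pos hBSpos _
  have hfBS : f (BS / Sf) = Sf ^ (1/β) / BS ^ (1/β) := by
    show (BS / Sf) ^ (-(1/β)) = Sf ^ (1/β) / BS ^ (1/β)
    rw [Real.rpow_neg (div_nonneg hBSpos.le hSf.le),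
      Real.div_rpow hBSpos.le hSf.le, inv_div]
  have hSfβ : Sf ^ (1/β) = N ^ (2 - α) := by
    rw [← hNα, ← Real.rpow_mul hN.le, mul_one_div, hαβ]
  have hN2 : Sf ^ (1/β) * Sf = N ^ 2 := by
    rw [hSfβ, ← hNα, ← Real.rpow_add hN, show (2 - α + α = (2:ℝ)) by ring, hrpow2]
  have h1 : N ^ 2 ≤ A * BS ^ (1/β) := by
    rw [hfBS, div_le_div_iff₀ hBSb hSf] at hJ
    rw [← hN2]
    linarith [hJ]
  have h2 : BS ^ (1/β) ≤ B := Real.rpow_le_rpow hBSpos.le hBSle (by positivity)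
  have h3 : N ^ 2 ≤ A * B := h1.trans (mul_le_mul_of_nonneg_left h2 hA0)
  rw [hBeq]
  constructor
  · exact amgm_half hA0 hBpos.le hN h3
  · intro heq
    obtain ⟨hAN, hBN⟩ := amgm_eq hA0 hBpos.le hN h3 heq
    have hABeq : A * B = N ^ 2 := by rw [hAN, hBN]; ring
    have h7 : A * B ≤ A * BS ^ (1/β) := by rw [hABeq]; exact h1
    have h6 : A * BS ^ (1/β) = A * B :=
      le_antisymm (mul_le_mul_of_nonneg_left h2 hA0) h7
    have hBSB : BS ^ (1/β) = B :=
      mul_left_cancel₀ (by rw [hAN]; exact hN.ne') h6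
    have hBSBall : BS = Ball := by
      by_contra hne
      have hlt : BS < Ball := lt_of_le_of_ne hBSle hne
      have hh := Real.rpow_lt_rpow hBSpos.le hlt (by positivity : (0:ℝ) < 1/β)
      rw [hBSB] at hh
      exact absurd hh (lt_irrefl B)
    have hzero : ∀ j, y j = 0 → z j = 0 := by
      intro j hyj
      by_contra hzj
      have hzjpos : 0 < z j := lt_of_le_of_ne (hz j) (Ne.symm hzj)
      have hjS : j ∉ S := by simp [hmemS, hyj]
      have hlt : BS < Ball := by
        refine Finset.sum_lt_sum_of_subset (Finset.subset_univ S)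
          (Finset.mem_univ j) hjS (Real.rpow_pos_of_pos hzjpos _) ?_
        exact fun k _ _ => Real.rpow_nonneg (hz k) _
      linarith [hBSBall.ge, hlt]
    -- Jensen equality case
    have h8 : ∑ j ∈ S, w j • f (x j) ≤ f (∑ j ∈ S, w j • x j) := by
      rw [hsum_wx, hsum_wfx, hfBS, div_le_div_iff₀ hSf hBSb, hN2]
      exact le_of_eq (h6.trans hABeq)
    have hconst := hf.eq_of_le_map_sum hwpos hw1 hxmem h8
    have hpowinj : ∀ t1 t2 : ℝ, 0 ≤ t1 → 0 ≤ t2 → t1 ^ β = t2 ^ β → t1 = t2 := by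
      intro t1 t2 ht1 ht2 hpow
      have h9 := congrArg (fun u : ℝ => u ^ (1/β)) hpow
      simpa [← Real.rpow_mul ht1, ← Real.rpow_mul ht2, mul_one_div,
        div_self hβne, mul_inv_cancel₀ hβne, Real.rpow_one] using h9
    have hratio : ∀ j ∈ S, z j / |y j| ^ (2-α) = z j0 / |y j0| ^ (2-α) := by
      intro j hj
      exact hpowinj _ _
        (div_nonneg (hz j) (Real.rpow_nonneg (abs_nonneg _) _))
        (div_nonneg (hz j0) (Real.rpow_nonneg (abs_nonneg _) _))
        (hconst hj hj0S)
    set c : ℝ := z j0 / |y j0| ^ (2-α) with hcdef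
    have hcpos : 0 < c :=
      div_pos (hzpos j0 hj0) (Real.rpow_pos_of_pos (abs_pos.mpr hj0) _)
    have hzS : ∀ j ∈ S, z j = c * |y j| ^ (2-α) := by
      intro j hj
      have h10 := hratio j hj
      have hyp : (0:ℝ) < |y j| ^ (2-α) :=
        Real.rpow_pos_of_pos (abs_pos.mpr ((hmemS j).mp hj)) _
      rw [div_eq_iff (ne_of_gt hyp)] at h10
      exact h10
    have hy2' : ∀ j, y j ≠ 0 → y j ^ 2 = |y j| ^ (2-α) * |y j| ^ α := by
      intro j hyj
      rw [← Real.rpow_add (abs_pos.mpr hyj), show (2 - α + α = (2:ℝ)) by ring,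
        show ((2:ℝ) = ((2:ℕ):ℝ)) by norm_num, Real.rpow_natCast, sq_abs]
    have hAc : A = Sf / c := by
      rw [hAdef, ← hSsum (fun j => y j ^ 2 / z j) (fun j hj => by simp [hj])]
      rw [hSfdef, ← hSsum (fun j => |y j| ^ α) (fun j hj => by
        simp [hj, Real.zero_rpow (ne_of_gt hα1)])]
      rw [Finset.sum_div]
      refine Finset.sum_congr rfl fun j hj => ?_
      have hyj := (hmemS j).mp hj
      have hyp : (0:ℝ) < |y j| ^ (2-α) :=
        Real.rpow_pos_of_pos (abs_pos.mpr hyj) _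
      rw [hzS j hj, hy2' j hyj]
      rw [mul_comm c (|y j| ^ (2-α)), mul_div_mul_left _ _ (ne_of_gt hyp)]
    have hcN : c = N ^ (α - 1) := by
      have h11 : Sf / c = N := by rw [← hAc]; exact hAN
      have h12 : c = Sf / N := by
        rw [div_eq_iff (ne_of_gt hcpos)] at h11
        rw [eq_div_iff hN.ne', h11]
        ring
      rw [h12, ← hNα]
      rw [show N ^ α / N = N ^ α / N ^ (1:ℝ) by rw [Real.rpow_one],
        ← Real.rpow_sub hN]
    funext j
    by_cases hyj : y j = 0
    · simp [hyj, hzero j hyj, Real.zero_rpow (ne_of_gt h2α)]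
    · rw [hzS j ((hmemS j).mpr hyj), hcN]
      ring


/-- The variational objective `(1/2)∑ y_j²/z_j + (1/2)‖z‖_β`, valued in `ℝ≥0∞`
so that `a/0 = ∞` for `a ≠ 0` and `0/0 = 0`. -/
noncomputable def varObj {p : ℕ} (β : ℝ) (y z : Fin p → ℝ) : ℝ≥0∞ :=
  (1 / 2) * ∑ j, ENNReal.ofReal (y j ^ 2) / ENNReal.ofReal (z j)
    + (1 / 2) * ENNReal.ofReal (lpQuasiNorm β z)


lemma varObj_top {β : ℝ} (y z : Fin p → ℝ) (j0 : Fin p) (hy0 : y j0 ≠ 0)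
    (hz0 : z j0 = 0) : varObj β y z = ⊤ := by
  have h1 : ENNReal.ofReal (y j0 ^ 2) / ENNReal.ofReal (z j0) = ⊤ := by
    rw [hz0, ENNReal.ofReal_zero, ENNReal.div_zero]
    exact (ENNReal.ofReal_pos.mpr (by positivity)).ne'
  have h2 : ∑ j, ENNReal.ofReal (y j ^ 2) / ENNReal.ofReal (z j) = ⊤ :=
    ENNReal.sum_eq_top.mpr ⟨j0, Finset.mem_univ _, h1⟩
  simp only [varObj]
  rw [h2, ENNReal.mul_top (by norm_num), top_add]

lemma lpQuasiNorm_nonneg (β : ℝ) (z : Fin p → ℝ) : 0 ≤ lpQuasiNorm β z :=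
  Real.rpow_nonneg (Finset.sum_nonneg fun j _ =>
    Real.rpow_nonneg (abs_nonneg _) _) _

lemma varObj_eq {β : ℝ} (y z : Fin p → ℝ) (hz : ∀ j, 0 ≤ z j)
    (hzpos : ∀ j, y j ≠ 0 → 0 < z j) :
    varObj β y z
      = ENNReal.ofReal (((∑ j, y j ^ 2 / z j) + lpQuasiNorm β z) / 2) := by
  have hA0 : 0 ≤ ∑ j, y j ^ 2 / z j :=
    Finset.sum_nonneg fun j _ => div_nonneg (sq_nonneg _) (hz j)
  have hL0 : 0 ≤ lpQuasiNorm β z := lpQuasiNorm_nonneg β z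
  have hterm : ∀ j ∈ Finset.univ (α := Fin p),
      ENNReal.ofReal (y j ^ 2) / ENNReal.ofReal (z j)
        = ENNReal.ofReal (y j ^ 2 / z j) := by
    intro j _
    by_cases hyj : y j = 0
    · simp [hyj]
    · rw [ENNReal.ofReal_div_of_pos (hzpos j hyj)]
  simp only [varObj]
  rw [Finset.sum_congr rfl hterm,
    ← ENNReal.ofReal_sum_of_nonneg (fun j _ => div_nonneg (sq_nonneg _) (hz j))]
  rw [show ((∑ j, y j ^ 2 / z j) + lpQuasiNorm β z) / 2
    = (1/2 : ℝ) * (∑ j, y j ^ 2 / z j) + (1/2 : ℝ) * lpQuasiNorm β z by ring]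
  rw [ENNReal.ofReal_add (by positivity) (by positivity),
    ENNReal.ofReal_mul (by norm_num), ENNReal.ofReal_mul (by norm_num)]
  have h12 : ENNReal.ofReal (1/2 : ℝ) = 2⁻¹ := by
    rw [ENNReal.ofReal_div_of_pos (by norm_num), ENNReal.ofReal_one,
      ENNReal.ofReal_ofNat, one_div]
  rw [h12]
  norm_num

lemma value_at_min (α β : ℝ) (hα1 : 0 < α) (hα2 : α < 2) (hβ : β = α / (2 - α))
    (y : Fin p → ℝ) (hy : y ≠ 0) :
    ((∑ j, y j ^ 2 / (|y j| ^ (2-α) * lpQuasiNorm α y ^ (α-1)))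
      + lpQuasiNorm β (fun j => |y j| ^ (2-α) * lpQuasiNorm α y ^ (α-1))) / 2
      = lpQuasiNorm α y := by
  have h2α : (0:ℝ) < 2 - α := by linarith
  have hβpos : 0 < β := by rw [hβ]; positivity
  have hβne : β ≠ 0 := ne_of_gt hβpos
  have hβα : (2 - α) * β = α := by rw [hβ]; field_simp
  have hαβ : α / β = 2 - α := by rw [hβ]; field_simp
  set Sf : ℝ := ∑ j, |y j| ^ α with hSfdef
  have hSf : 0 < Sf := sum_abs_rpow_pos hα1 hy
  set N : ℝ := lpQuasiNorm α y with hNdef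
  have hN : 0 < N := lpQuasiNorm_pos hα1 hy
  have hNα : N ^ α = Sf := lpQuasiNorm_rpow hα1 hy
  have hA : (∑ j, y j ^ 2 / (|y j| ^ (2-α) * N ^ (α-1))) = N := by
    have hterm : ∀ j ∈ Finset.univ (α := Fin p),
        y j ^ 2 / (|y j| ^ (2-α) * N ^ (α-1)) = |y j| ^ α * N ^ (1-α) := by
      intro j _
      by_cases hyj : y j = 0
      · simp [hyj, Real.zero_rpow (ne_of_gt hα1)]
      · have hyjpos : 0 < |y j| := abs_pos.mpr hyj
        have hyp : (0:ℝ) < |y j| ^ (2-α) := Real.rpow_pos_of_pos hyjpos _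
        have hy2 : y j ^ 2 = |y j| ^ (2-α) * |y j| ^ α := by
          rw [← Real.rpow_add hyjpos, show (2 - α + α = (2:ℝ)) by ring,
            show ((2:ℝ) = ((2:ℕ):ℝ)) by norm_num, Real.rpow_natCast, sq_abs]
        rw [hy2, mul_div_mul_left _ _ (ne_of_gt hyp), div_eq_mul_inv,
          ← Real.rpow_neg hN.le, show -(α-1) = 1-α by ring]
    rw [Finset.sum_congr rfl hterm, ← Finset.sum_mul, ← hSfdef, ← hNα,
      ← Real.rpow_add hN, show (α + (1 - α) = (1:ℝ)) by ring, Real.rpow_one]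
  have hB : lpQuasiNorm β (fun j => |y j| ^ (2-α) * N ^ (α-1)) = N := by
    rw [lpQuasiNorm]
    have hterm : ∀ j ∈ Finset.univ (α := Fin p),
        |(|y j| ^ (2-α) * N ^ (α-1))| ^ β = |y j| ^ α * N ^ ((α-1)*β) := by
      intro j _
      rw [abs_of_nonneg (by positivity)]
      rw [Real.mul_rpow (Real.rpow_nonneg (abs_nonneg _) _) (Real.rpow_nonneg hN.le _),
        ← Real.rpow_mul (abs_nonneg _), hβα, ← Real.rpow_mul hN.le]
    rw [Finset.sum_congr rfl hterm, ← Finset.sum_mul, ← hSfdef, ← hNα,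
      ← Real.rpow_add hN, ← Real.rpow_mul hN.le]
    rw [show ((α + (α-1)*β) * (1/β)) = α/β + (α - 1) by field_simp, hαβ,
      show (2 - α + (α - 1) = (1:ℝ)) by ring, Real.rpow_one]
  rw [hA, hB]
  ring

/-- For `y ≠ 0`, `α ∈ (0,2)`, `β = α/(2-α)`, the minimum in the variational formula
`‖y‖_α = min_z (1/2)∑ y_j²/z_j + (1/2)‖z‖_β` is uniquely attained at
`z_j = |y_j|^{2-α} ‖y‖_α^{α-1}`. -/
theorem sparse_pca_variational_unique_minimizer {p : ℕ} (α β : ℝ)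
    (hα : α ∈ Set.Ioo (0 : ℝ) 2) (hβ : β = α / (2 - α))
    (y : Fin p → ℝ) (hy : y ≠ 0) :
    (∀ z : Fin p → ℝ, (∀ j, 0 ≤ z j) →
        ENNReal.ofReal (lpQuasiNorm α y) ≤ varObj β y z) ∧
    varObj β y (fun j => |y j| ^ (2 - α) * lpQuasiNorm α y ^ (α - 1))
        = ENNReal.ofReal (lpQuasiNorm α y) ∧
    (∀ z : Fin p → ℝ, (∀ j, 0 ≤ z j) →
        varObj β y z = ENNReal.ofReal (lpQuasiNorm α y) →
        z = fun j => |y j| ^ (2 - α) * lpQuasiNorm α y ^ (α - 1)) := by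
  obtain ⟨hα1, hα2⟩ := hα
  have h2α : (0:ℝ) < 2 - α := by linarith
  have hN : 0 < lpQuasiNorm α y := lpQuasiNorm_pos hα1 hy
  refine ⟨?_, ?_, ?_⟩
  · intro z hz
    by_cases hcase : ∀ j, y j ≠ 0 → 0 < z j
    · rw [varObj_eq y z hz hcase]
      exact ENNReal.ofReal_le_ofReal (key_real α β hα1 hα2 hβ y hy z hz hcase).1
    · push_neg at hcase
      obtain ⟨j0, hyj0, hzj0⟩ := hcase
      rw [varObj_top y z j0 hyj0 (le_antisymm hzj0 (hz j0))]
      exact le_top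
  · have hzpos : ∀ j, y j ≠ 0 → 0 < |y j| ^ (2-α) * lpQuasiNorm α y ^ (α-1) := by
      intro j hyj
      have h := abs_pos.mpr hyj
      positivity
    have hznn : ∀ j, 0 ≤ |y j| ^ (2-α) * lpQuasiNorm α y ^ (α-1) := fun j => by
      positivity
    rw [varObj_eq y _ hznn hzpos, value_at_min α β hα1 hα2 hβ y hy]
  · intro z hz heq
    by_cases hcase : ∀ j, y j ≠ 0 → 0 < z j
    · rw [varObj_eq y z hz hcase] at heq
      have hs : 0 ≤ ∑ j, y j ^ 2 / z j :=
        Finset.sum_nonneg fun j _ => div_nonneg (sq_nonneg _) (hz j)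
      have hL : 0 ≤ ((∑ j, y j ^ 2 / z j) + lpQuasiNorm β z) / 2 := by
        have := lpQuasiNorm_nonneg β z
        linarith
      have hreal := (ENNReal.ofReal_eq_ofReal_iff hL hN.le).mp heq
      exact (key_real α β hα1 hα2 hβ y hy z hz hcase).2 hreal
    · push_neg at hcase
      obtain ⟨j0, hyj0, hzj0⟩ := hcase
      rw [varObj_top y z j0 hyj0 (le_antisymm hzj0 (hz j0))] at heq
      exact absurd heq.symm ENNReal.ofReal_ne_top
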